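/- The almost complex structure J on S³×S³ defined by J(U,V) = (1/√3)(2pq⁻¹V − U, −2qp⁻¹U + V) at a point (p,q), where tangent vectors to S³ at p are identified with quaternions, satisfies J² = −Id on each tangent space. -/

import Mathlib

noncomputable section

/-- The almost complex structure `J` of the nearly Kähler `S³ × S³` at the point `(p, q)`,
acting on a tangent vector `Z = (U, V)` (pairs of quaternions with `U ⊥ p`, `V ⊥ q`). -/
def NKJ (p q : Quaternion ℝ) (Z : Quaternion ℝ × Quaternion ℝ) :
    Quaternion ℝ × Quaternion ℝ :=
  ((Real.sqrt 3)⁻¹ • ((2 : ℝ) • (p * q⁻¹ * Z.2) - Z.1),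
   (Real.sqrt 3)⁻¹ • (-((2 : ℝ) • (q * p⁻¹ * Z.1)) + Z.2))

/-- `J² = -Id` on each tangent space of `S³ × S³`. -/
theorem NKJ_sq_eq_neg_id (p q : Quaternion ℝ) (hp : ‖p‖ = 1) (hq : ‖q‖ = 1)
    (U V : Quaternion ℝ) (hU : (inner ℝ U p : ℝ) = 0) (hV : (inner ℝ V q : ℝ) = 0) :
    NKJ p q (NKJ p q (U, V)) = (-U, -V) := by
  have hp0 : p ≠ 0 := by intro h; simp [h] at hp
  have hq0 : q ≠ 0 := by intro h; simp [h] at hq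
  have h1 : p * q⁻¹ * (q * p⁻¹ * U) = U := by
    rw [mul_assoc q p⁻¹ U, mul_assoc p q⁻¹, inv_mul_cancel_left₀ hq0, mul_inv_cancel_left₀ hp0]
  have h2 : q * p⁻¹ * (p * q⁻¹ * V) = V := by
    rw [mul_assoc p q⁻¹ V, mul_assoc q p⁻¹, inv_mul_cancel_left₀ hp0, mul_inv_cancel_left₀ hq0]
  have hs : Real.sqrt 3 * Real.sqrt 3 = 3 := Real.mul_self_sqrt (by norm_num)
  have hs0 : Real.sqrt 3 ≠ 0 := by positivity
  simp only [NKJ, Prod.mk.injEq, mul_smul_comm, smul_sub, smul_add, smul_neg, smul_smul,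
    mul_sub, mul_add, mul_neg, h1, h2]
  constructor <;> match_scalars <;> field_simp <;> nlinarith [hs]
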